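/- Let T be a t-norm and let R be a fuzzy T-equivalence on a set U. Then for any subset A ⊆ U, μ_{[A]_R}(x) = μ_{[A]^R}(x) for all x ∈ U if and only if A_S = A^S; i.e., the fuzzy rough set of A is exact if and only if A is an exact set for the support relation S. -/
import Mathlib


open unitInterval

noncomputable section

instance : Fact ((0:ℝ) ≤ 1) := ⟨zero_le_one⟩

/-- A t-norm on the unit interval: commutative, associative, monotone in each
argument, with `1` as unit. -/
def IsTnorm (T : I → I → I) : Prop :=
  (∀ x y, T x y = T y x) ∧
  (∀ x y z, T (T x y) z = T x (T y z)) ∧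
  (∀ x₁ x₂ y, x₁ ≤ x₂ → T x₁ y ≤ T x₂ y) ∧
  (∀ x y₁ y₂, y₁ ≤ y₂ → T x y₁ ≤ T x y₂) ∧
  (∀ x, T x 1 = x)

/-- A fuzzy `T`-equivalence: reflexive, symmetric, `T`-transitive fuzzy relation. -/
def IsFuzzyTEquiv {U : Type*} (T : I → I → I) (μ : U → U → I) : Prop :=
  (∀ x, μ x x = 1) ∧ (∀ x y, μ x y = μ y x) ∧ (∀ x y z, T (μ x y) (μ y z) ≤ μ x z)

/-- Fuzzy upper approximation of a crisp set `A`: `sup {μ x y | y ∈ A}` (`sup ∅ = 0`). -/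
def upperApp {U : Type*} (μ : U → U → I) (A : Set U) (x : U) : I := sSup (μ x '' A)

/-- Fuzzy lower approximation of a crisp set `A`: `inf {1 - μ x y | y ∉ A}` (`inf ∅ = 1`). -/
def lowerApp {U : Type*} (μ : U → U → I) (A : Set U) (x : U) : I :=
  sInf ((fun y => σ (μ x y)) '' Aᶜ)

/-- The spectrum of a fuzzy relation. -/
def fuzzySpectrum {U : Type*} (μ : U → U → I) : Set I := {r | ∃ x y, μ x y = r}

/-- `R` has a dually well-ordered spectrum: every nonempty subset of the
spectrum has a greatest element. -/
def DuallyWellOrdered {U : Type*} (μ : U → U → I) : Prop :=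
  ∀ s ⊆ fuzzySpectrum μ, s.Nonempty → ∃ m ∈ s, ∀ r ∈ s, r ≤ m

/-- Upper approximation by the crisp equivalence `E = {(x,y) | μ x y = 1}`. -/
def upperE {U : Type*} (μ : U → U → I) (A : Set U) : Set U :=
  {x | ({y | μ x y = 1} ∩ A).Nonempty}

/-- Lower approximation by the crisp equivalence `E = {(x,y) | μ x y = 1}`. -/
def lowerE {U : Type*} (μ : U → U → I) (A : Set U) : Set U :=
  {x | {y | μ x y = 1} ⊆ A}

/-- Upper approximation by the support relation `S = {(x,y) | μ x y > 0}`. -/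
def upperS {U : Type*} (μ : U → U → I) (A : Set U) : Set U :=
  {x | ({y | 0 < μ x y} ∩ A).Nonempty}

/-- Lower approximation by the support relation `S = {(x,y) | μ x y > 0}`. -/
def lowerS {U : Type*} (μ : U → U → I) (A : Set U) : Set U :=
  {x | {y | 0 < μ x y} ⊆ A}

/-- the fuzzy rough set of `A` is exact iff `A` is exact for the
support relation `S`. -/
theorem stmt11 {U : Type*} (T : I → I → I) (μ : U → U → I)
    (hT : IsTnorm T) (hR : IsFuzzyTEquiv T μ) (A : Set U) :
    (∀ x : U, lowerApp μ A x = upperApp μ A x) ↔ lowerS μ A = upperS μ A := by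
  obtain ⟨hrefl, hsym, htrans⟩ := hR
  have h01 : (0:I) < 1 := by rw [← Subtype.coe_lt_coe]; norm_num
  constructor
  · intro h
    ext x
    constructor
    · intro hx
      have hxx : (0:I) < μ x x := by rw [hrefl]; exact h01
      exact ⟨x, hxx, hx hxx⟩
    · rintro ⟨y, hy, hyA⟩
      have hxA : x ∈ A := by
        by_contra hxA
        have h1 : lowerApp μ A x ≤ σ (μ x x) := sInf_le ⟨x, hxA, rfl⟩
        rw [hrefl, symm_one] at h1
        have h2 : μ x y ≤ upperApp μ A x := le_sSup ⟨y, hyA, rfl⟩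
        rw [← h x] at h2
        exact absurd (lt_of_lt_of_le hy (h2.trans h1)) (lt_irrefl 0)
      intro z hz'
      by_contra hzA
      have h1 : lowerApp μ A x ≤ σ (μ x z) := sInf_le ⟨z, hzA, rfl⟩
      have h2 : μ x x ≤ upperApp μ A x := le_sSup ⟨x, hxA, rfl⟩
      rw [hrefl, ← h x] at h2
      have hσ : σ (μ x z) = 1 := le_antisymm le_one' (h2.trans h1)
      have hμ : μ x z = 0 := by
        have := congrArg σ hσ
        rwa [symm_symm, symm_one] at this
      rw [Set.mem_setOf_eq, hμ] at hz'
      exact absurd hz' (lt_irrefl 0)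
  · intro hSE x
    by_cases hx : x ∈ A
    · have hxS : x ∈ lowerS μ A := by
        rw [hSE]
        exact ⟨x, show (0:I) < μ x x by rw [hrefl]; exact h01, hx⟩
      have hup : upperApp μ A x = 1 :=
        le_antisymm le_one' (by rw [← hrefl x]; exact le_sSup ⟨x, hx, rfl⟩)
      have hlow : lowerApp μ A x = 1 := by
        refine le_antisymm le_one' (le_sInf ?_)
        rintro b ⟨z, hzA, rfl⟩
        have hμ : μ x z = 0 := by
          by_contra hc
          exact hzA (hxS (lt_of_le_of_ne nonneg' (Ne.symm hc)))
        show (1:I) ≤ σ (μ x z)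
        rw [hμ, symm_zero]
      rw [hlow, hup]
    · have hxU : x ∉ upperS μ A := by
        rintro hxU
        rw [← hSE] at hxU
        have hxx : (0:I) < μ x x := by rw [hrefl]; exact h01
        exact hx (hxU hxx)
      have hup : upperApp μ A x = 0 := by
        refine le_antisymm (sSup_le ?_) nonneg'
        rintro b ⟨y, hyA, rfl⟩
        have hμ : μ x y = 0 := by
          by_contra hc
          exact hxU ⟨y, lt_of_le_of_ne nonneg' (Ne.symm hc), hyA⟩
        exact le_of_eq hμ
      have hlow : lowerApp μ A x = 0 := by
        refine le_antisymm ?_ nonneg'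
        have h1 : lowerApp μ A x ≤ σ (μ x x) := sInf_le ⟨x, hx, rfl⟩
        rwa [hrefl, symm_one] at h1
      rw [hlow, hup]
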